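/- Let g be a Lie algebra with a positive-definite inner product h and let A ∈ g be such that ad_A is skew-symmetric with respect to h (A is a 'Killing element'). If g is nilpotent, then A is central: [A, X] = 0 for all X ∈ g. -/

import Mathlib

/-- Let `g` be a nilpotent Lie algebra with a positive-definite inner product
`h`, and let `A ∈ g` be such that `ad_A` is skew-symmetric with respect to `h`
(a "Killing element"): `h([A,X],Y) + h(X,[A,Y]) = 0` for all `X, Y`.  Then `A`
is central: `[A,X] = 0` for all `X ∈ g`. -/
theorem stmt17 (g : Type*) [LieRing g] [LieAlgebra ℝ g]
    [LieRing.IsNilpotent g]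
    (h : g →ₗ[ℝ] g →ₗ[ℝ] ℝ)
    (hsymm : ∀ X Y : g, h X Y = h Y X)
    (hpos : ∀ X : g, X ≠ 0 → 0 < h X X)
    (A : g)
    (hskew : ∀ X Y : g, h ⁅A, X⁆ Y + h X ⁅A, Y⁆ = 0) :
    ∀ X : g, ⁅A, X⁆ = 0 := by
  intro X
  by_contra hX
  obtain ⟨n, hn⟩ := LieModule.isNilpotent_toEnd_of_isNilpotent ℝ g g A
  -- (ad A)^n = 0
  have had : ∀ Z : g, ((LieModule.toEnd ℝ g g A) ^ n) Z = 0 := by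
    intro Z; rw [hn]; rfl
  -- find largest k with (ad A)^k X ≠ 0
  set f := LieModule.toEnd ℝ g g A with hf
  have hfx : ∀ Z : g, f Z = ⁅A, Z⁆ := fun Z => rfl
  have h1 : (f ^ 1) X ≠ 0 := by simpa [pow_one, hfx] using hX
  have hex : ∃ k, (f ^ (k + 1)) X = 0 := ⟨n, by
    rw [pow_succ, Module.End.mul_apply]; exact had _⟩
  classical
  let k := Nat.find hex
  have hk0 : (f ^ (k + 1)) X = 0 := Nat.find_spec hex
  have hkne : k ≠ 0 := by
    intro h0
    apply h1
    simpa [h0] using hk0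
  obtain ⟨m, hm⟩ := Nat.exists_eq_succ_of_ne_zero hkne
  have hYne : (f ^ k) X ≠ 0 := by
    have := Nat.find_min hex (m := m) (by omega)
    simpa [hm] using this
  set Y := (f ^ k) X with hY
  have hbr : ⁅A, Y⁆ = 0 := by
    have : f Y = (f ^ (k + 1)) X := by
      rw [pow_succ', Module.End.mul_apply]
    rw [← hfx]
    rw [this, hk0]
  have hW : Y = ⁅A, (f ^ m) X⁆ := by
    rw [hY, hm, Nat.succ_eq_add_one, pow_succ', Module.End.mul_apply, hfx]
  have := hskew ((f ^ m) X) Y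
  rw [← hW, hbr, map_zero] at this
  simp only [LinearMap.zero_apply, add_zero] at this
  exact absurd this (ne_of_gt (hpos Y hYne))
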